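/- arXiv:2108.01629 — 2 statements merged into one kernel-verified Lean document; each statement's English description precedes it below -/
import Mathlib

section
/- In the same setting, for z in the open upper half-plane and 0 ≤ x₁ ≤ x₂, (T(x₂,z)* j T(x₂,z) - T(x₁,z)* j T(x₁,z))/i is negative semidefinite. -/
open Matrix MeasureTheory
open scoped ComplexOrder

/-- j = [[0,-1],[1,0]]. -/
noncomputable def jmat : Matrix (Fin 2) (Fin 2) ℂ := !![0, -1; 1, 0]

/-- Complexification of a real 2×2 matrix. -/
noncomputable def cplx (A : Matrix (Fin 2) (Fin 2) ℝ) : Matrix (Fin 2) (Fin 2) ℂ :=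
  A.map Complex.ofReal

/-- Triangle-Fubini identity for products of integrals. -/
lemma key_swap {a b : ℝ} (f g : ℝ → ℂ)
    (hf : IntegrableOn f (Set.Ioc a b) volume) (hg : IntegrableOn g (Set.Ioc a b) volume) :
    (∫ x in Set.Ioc a b, f x) * (∫ x in Set.Ioc a b, g x)
      = (∫ x in Set.Ioc a b, f x * ∫ y in Set.Ioc a x, g y)
      + (∫ y in Set.Ioc a b, (∫ x in Set.Ioc a y, f x) * g y) := by
  set μ := volume.restrict (Set.Ioc a b) with hμ
  have hprod : Integrable (fun p : ℝ × ℝ => f p.1 * g p.2) (μ.prod μ) := hf.mul_prod hg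
  have hs : MeasurableSet {p : ℝ × ℝ | p.2 ≤ p.1} :=
    measurableSet_le measurable_snd measurable_fst
  have hsplit : ∫ p : ℝ × ℝ, f p.1 * g p.2 ∂(μ.prod μ)
      = (∫ p in {p : ℝ × ℝ | p.2 ≤ p.1}, f p.1 * g p.2 ∂(μ.prod μ))
        + ∫ p in {p : ℝ × ℝ | p.2 ≤ p.1}ᶜ, f p.1 * g p.2 ∂(μ.prod μ) :=
    (integral_add_compl hs hprod).symm
  have hlow : (∫ p in {p : ℝ × ℝ | p.2 ≤ p.1}, f p.1 * g p.2 ∂(μ.prod μ))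
      = ∫ x in Set.Ioc a b, f x * ∫ y in Set.Ioc a x, g y := by
    rw [← integral_indicator hs]
    rw [MeasureTheory.integral_prod _ (hprod.indicator hs)]
    refine setIntegral_congr_fun measurableSet_Ioc ?_
    intro x hx
    have : ∀ y : ℝ, Set.indicator {p : ℝ × ℝ | p.2 ≤ p.1} (fun p => f p.1 * g p.2) (x, y)
        = Set.indicator (Set.Iic x) (fun y => f x * g y) y := by
      intro y
      by_cases h : y ≤ x <;> simp [Set.indicator_apply, h]
    simp_rw [this]
    rw [integral_indicator measurableSet_Iic, hμ, Measure.restrict_restrict measurableSet_Iic]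
    have : Set.Iic x ∩ Set.Ioc a b = Set.Ioc a x := by
      ext t; simp only [Set.mem_inter_iff, Set.mem_Iic, Set.mem_Ioc]
      exact ⟨fun ⟨h1, h2, h3⟩ => ⟨h2, h1⟩, fun ⟨h1, h2⟩ => ⟨h2, h1, h2.trans hx.2⟩⟩
    rw [this, MeasureTheory.integral_const_mul]
  have hupp : (∫ p in {p : ℝ × ℝ | p.2 ≤ p.1}ᶜ, f p.1 * g p.2 ∂(μ.prod μ))
      = ∫ y in Set.Ioc a b, (∫ x in Set.Ioc a y, f x) * g y := by
    rw [← integral_indicator hs.compl]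
    rw [MeasureTheory.integral_prod_symm _ (hprod.indicator hs.compl)]
    refine setIntegral_congr_fun measurableSet_Ioc ?_
    intro y hy
    have : ∀ x : ℝ, Set.indicator {p : ℝ × ℝ | p.2 ≤ p.1}ᶜ (fun p => f p.1 * g p.2) (x, y)
        = Set.indicator (Set.Iio y) (fun x => f x * g y) x := by
      intro x
      by_cases h : x < y
      · simp [Set.indicator_apply, h, not_le.mpr h]
      · simp [Set.indicator_apply, h, not_lt.mp h]
    simp_rw [this]
    rw [integral_indicator measurableSet_Iio, hμ, Measure.restrict_restrict measurableSet_Iio]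
    have : Set.Iio y ∩ Set.Ioc a b = Set.Ioo a y := by
      ext t; simp only [Set.mem_inter_iff, Set.mem_Iio, Set.mem_Ioc, Set.mem_Ioo]
      exact ⟨fun ⟨h1, h2, h3⟩ => ⟨h2, h1⟩, fun ⟨h1, h2⟩ => ⟨h2, h1, (le_of_lt h2).trans hy.2⟩⟩
    rw [this, ← integral_Ioc_eq_integral_Ioo, MeasureTheory.integral_mul_const]
  rw [← MeasureTheory.integral_prod_mul, hsplit, hlow, hupp]

/-- Product rule / integration by parts for functions given by integral representations. -/
lemma parts {a b : ℝ} (hab : a ≤ b) (u v u' v' : ℝ → ℂ)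
    (hu'i : IntervalIntegrable u' volume a b) (hv'i : IntervalIntegrable v' volume a b)
    (hucont : Continuous u) (hvcont : Continuous v)
    (hu : ∀ x, u x = u a + ∫ t in a..x, u' t) (hv : ∀ x, v x = v a + ∫ t in a..x, v' t) :
    u b * v b - u a * v a = ∫ x in a..b, (u' x * v x + u x * v' x) := by
  set F : ℝ → ℂ := fun x => ∫ t in a..x, u' t with hF
  set G : ℝ → ℂ := fun x => ∫ t in a..x, v' t with hG
  have hu'G : IntervalIntegrable (fun x => u' x * G x) volume a b := by
    have : (fun x => u' x * G x) = fun x => u' x * v x - u' x * v a := by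
      funext x; rw [hv x]; ring
    rw [this]
    exact (hu'i.mul_continuousOn hvcont.continuousOn).sub (hu'i.mul_const _)
  have hFv' : IntervalIntegrable (fun x => F x * v' x) volume a b := by
    have : (fun x => F x * v' x) = fun x => u x * v' x - u a * v' x := by
      funext x; rw [hu x]; ring
    rw [this]
    exact (hv'i.continuousOn_mul hucont.continuousOn).sub (hv'i.const_mul _)
  have e1 : ∫ x in a..b, u' x * v x
      = (∫ x in a..b, u' x) * v a + ∫ x in a..b, u' x * G x := by
    have h : ∀ x ∈ Set.uIcc a b, u' x * v x = u' x * v a + u' x * G x := by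
      intro x _; rw [hv x]; ring
    rw [intervalIntegral.integral_congr h,
      intervalIntegral.integral_add (hu'i.mul_const _) hu'G,
      intervalIntegral.integral_mul_const]
  have e2 : ∫ x in a..b, u x * v' x
      = u a * (∫ x in a..b, v' x) + ∫ x in a..b, F x * v' x := by
    have h : ∀ x ∈ Set.uIcc a b, u x * v' x = u a * v' x + F x * v' x := by
      intro x _; rw [hu x]; ring
    rw [intervalIntegral.integral_congr h,
      intervalIntegral.integral_add (hv'i.const_mul _) hFv',
      intervalIntegral.integral_const_mul]
  have hswap : F b * G b
      = (∫ x in a..b, u' x * G x) + ∫ x in a..b, F x * v' x := by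
    have k := key_swap u' v' hu'i.1 hv'i.1
    have eG : ∫ x in Set.Ioc a b, u' x * ∫ y in Set.Ioc a x, v' y
        = ∫ x in Set.Ioc a b, u' x * G x := by
      refine setIntegral_congr_fun measurableSet_Ioc fun x hx => ?_
      simp only [hG, intervalIntegral.integral_of_le hx.1.le]
    have eF : ∫ y in Set.Ioc a b, (∫ x in Set.Ioc a y, u' x) * v' y
        = ∫ y in Set.Ioc a b, F y * v' y := by
      refine setIntegral_congr_fun measurableSet_Ioc fun y hy => ?_
      simp only [hF, intervalIntegral.integral_of_le hy.1.le]
    rw [eG, eF] at k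
    have hFb : F b = ∫ x in Set.Ioc a b, u' x := intervalIntegral.integral_of_le hab
    have hGb : G b = ∫ x in Set.Ioc a b, v' x := intervalIntegral.integral_of_le hab
    rw [hFb, hGb, k, intervalIntegral.integral_of_le hab,
      intervalIntegral.integral_of_le hab]
  have hint1 : IntervalIntegrable (fun x => u' x * v x) volume a b :=
    hu'i.mul_continuousOn hvcont.continuousOn
  have hint2 : IntervalIntegrable (fun x => u x * v' x) volume a b :=
    hv'i.continuousOn_mul hucont.continuousOn
  rw [intervalIntegral.integral_add hint1 hint2, e1, e2, hu b, hv b]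
  have hFb' : (∫ x in a..b, u' x) = F b := rfl
  have hGb' : (∫ x in a..b, v' x) = G b := rfl
  rw [hFb', hGb']
  linear_combination hswap

lemma II.ofReal' {f : ℝ → ℝ} {a b : ℝ} (h : IntervalIntegrable f volume a b) :
    IntervalIntegrable (fun x => (f x : ℂ)) volume a b :=
  ⟨h.1.ofReal, h.2.ofReal⟩

lemma II.conj' {f : ℝ → ℂ} {a b : ℝ} (h : IntervalIntegrable f volume a b) :
    IntervalIntegrable (fun x => (starRingEnd ℂ) (f x)) volume a b :=
  ⟨Complex.conjCLE.toContinuousLinearMap.integrable_comp h.1,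
   Complex.conjCLE.toContinuousLinearMap.integrable_comp h.2⟩

lemma intervalIntegral_conj {f : ℝ → ℂ} {a b : ℝ} :
    ∫ x in a..b, (starRingEnd ℂ) (f x) = (starRingEnd ℂ) (∫ x in a..b, f x) := by
  simp [intervalIntegral, ← integral_conj, map_sub]

lemma jmat_inv : jmat⁻¹ = !![0, 1; -1, 0] := by
  have h : jmat * !![0, 1; -1, 0] = 1 := by
    rw [show (1 : Matrix (Fin 2) (Fin 2) ℂ) = !![1,0;0,1] from by
      ext i k; fin_cases i <;> fin_cases k <;> simp [Matrix.one_apply]]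
    simp [jmat, Matrix.mul_fin_two]
  exact Matrix.inv_eq_right_inv h

lemma jmat_herm : jmatᴴ = -jmat := by
  ext i k
  fin_cases i <;> fin_cases k <;>
    simp [jmat, Matrix.conjTranspose_apply]

/-- quadratic form of complexified real PSD matrix is real and nonneg. -/
lemma cplx_quad {A : Matrix (Fin 2) (Fin 2) ℝ} (hA : A.PosSemidef) (w : Fin 2 → ℂ) :
    (starRingEnd ℂ) (w 0) * (A 0 0 : ℂ) * w 0 + (starRingEnd ℂ) (w 0) * (A 0 1 : ℂ) * w 1
      + (starRingEnd ℂ) (w 1) * (A 1 0 : ℂ) * w 0 + (starRingEnd ℂ) (w 1) * (A 1 1 : ℂ) * w 1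
    = (((fun p => (w p).re) ⬝ᵥ A *ᵥ (fun p => (w p).re)
        + (fun p => (w p).im) ⬝ᵥ A *ᵥ (fun p => (w p).im) : ℝ) : ℂ) := by
  have hsymm : A 1 0 = A 0 1 := by
    have := hA.1
    have h10 := congrFun (congrFun this 0) 1
    simpa [Matrix.conjTranspose_apply] using h10
  simp only [dotProduct, Matrix.mulVec, Fin.sum_univ_two, dotProduct]
  apply Complex.ext <;>
    simp [Complex.add_re, Complex.add_im, Complex.mul_re, Complex.mul_im, hsymm] <;> ring


/-- Pointwise algebraic identity for the integrand. -/
lemma ptwise (z : ℂ) (Aq Bq : Matrix (Fin 2) (Fin 2) ℝ)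
    (hA10 : Aq 1 0 = Aq 0 1) (hB10 : Bq 1 0 = Bq 0 1) (W F : Fin 2 → ℂ)
    (hF : ∀ p, F p = (jmat⁻¹ * ((-z) • cplx Aq + cplx Bq)) p 0 * W 0
      + (jmat⁻¹ * ((-z) • cplx Aq + cplx Bq)) p 1 * W 1) :
    ((starRingEnd ℂ) (F 1) * W 0 + (starRingEnd ℂ) (W 1) * F 0)
      - ((starRingEnd ℂ) (F 0) * W 1 + (starRingEnd ℂ) (W 0) * F 1)
    = ((starRingEnd ℂ) z - z) *
        ((starRingEnd ℂ) (W 0) * (Aq 0 0 : ℂ) * W 0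
          + (starRingEnd ℂ) (W 0) * (Aq 0 1 : ℂ) * W 1
          + (starRingEnd ℂ) (W 1) * (Aq 1 0 : ℂ) * W 0
          + (starRingEnd ℂ) (W 1) * (Aq 1 1 : ℂ) * W 1) := by
  have hM : ∀ q r : Fin 2, ((-z) • cplx Aq + cplx Bq) q r = -z * (Aq q r : ℂ) + (Bq q r : ℂ) := by
    intro q r
    simp [cplx, Matrix.map_apply, Matrix.smul_apply, Matrix.add_apply, smul_eq_mul]
  have he0 : ∀ r : Fin 2, (jmat⁻¹ * ((-z) • cplx Aq + cplx Bq)) 0 r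
      = ((-z) • cplx Aq + cplx Bq) 1 r := by
    intro r
    rw [jmat_inv, Matrix.mul_apply, Fin.sum_univ_two]
    simp
  have he1 : ∀ r : Fin 2, (jmat⁻¹ * ((-z) • cplx Aq + cplx Bq)) 1 r
      = -((-z) • cplx Aq + cplx Bq) 0 r := by
    intro r
    rw [jmat_inv, Matrix.mul_apply, Fin.sum_univ_two]
    simp
  rw [hF 0, hF 1, he0 0, he0 1, he1 0, he1 1, hM 0 0, hM 0 1, hM 1 0, hM 1 1, hA10, hB10]
  simp only [map_add, _root_.map_mul, map_neg, Complex.conj_ofReal]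
  ring

theorem stmt7 (A B : ℝ → Matrix (Fin 2) (Fin 2) ℝ)
    (T : ℝ → ℂ → Matrix (Fin 2) (Fin 2) ℂ)
    (hIntA : ∀ (L : ℝ) (i k : Fin 2), IntervalIntegrable (fun x => A x i k) volume 0 L)
    (hIntB : ∀ (L : ℝ) (i k : Fin 2), IntervalIntegrable (fun x => B x i k) volume 0 L)
    (hA : ∀ᵐ x ∂(volume.restrict (Set.Ici (0:ℝ))), (A x).PosSemidef)
    (hB : ∀ᵐ x ∂(volume.restrict (Set.Ici (0:ℝ))), (B x).IsSymm)
    (hTc : ∀ (z : ℂ) (i k : Fin 2), Continuous fun x => T x z i k)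
    (hT : ∀ (z : ℂ) (L : ℝ) (i k : Fin 2),
      T L z i k = (1 : Matrix (Fin 2) (Fin 2) ℂ) i k
        + ∫ x in (0:ℝ)..L, (jmat⁻¹ * (((-z) • cplx (A x) + cplx (B x)) * T x z)) i k) :
    ∀ (z : ℂ), 0 < z.im → ∀ (x₁ x₂ : ℝ), 0 ≤ x₁ → x₁ ≤ x₂ →
      (-(Complex.I⁻¹ • ((T x₂ z)ᴴ * jmat * T x₂ z - (T x₁ z)ᴴ * jmat * T x₁ z))).PosSemidef := by
  intro z hz x₁ x₂ hx₁ h12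
  set M : ℝ → Matrix (Fin 2) (Fin 2) ℂ := fun x => (-z) • cplx (A x) + cplx (B x) with hMdef
  set g : Fin 2 → Fin 2 → ℝ → ℂ := fun i k x => (jmat⁻¹ * (M x * T x z)) i k with hgdef
  have hM : ∀ (x : ℝ) (q r : Fin 2), M x q r = -z * (A x q r : ℂ) + (B x q r : ℂ) := by
    intro x q r
    simp [hMdef, cplx, Matrix.map_apply, Matrix.smul_apply, Matrix.add_apply, smul_eq_mul]
  have hMint : ∀ (p q : Fin 2) (a b : ℝ), IntervalIntegrable (fun x => M x p q) volume a b := by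
    intro p q a b
    simp only [hM]
    exact ((II.ofReal' ((hIntA a p q).symm.trans (hIntA b p q))).const_mul (-z)).add
      (II.ofReal' ((hIntB a p q).symm.trans (hIntB b p q)))
  have hgint : ∀ (i k : Fin 2) (a b : ℝ), IntervalIntegrable (g i k) volume a b := by
    intro i k a b
    have h1 : ∀ x, g i k x = jmat⁻¹ i 0 * (M x 0 0 * T x z 0 k + M x 0 1 * T x z 1 k)
        + jmat⁻¹ i 1 * (M x 1 0 * T x z 0 k + M x 1 1 * T x z 1 k) := by
      intro x
      show (jmat⁻¹ * (M x * T x z)) i k = _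
      rw [Matrix.mul_apply, Fin.sum_univ_two, Matrix.mul_apply, Matrix.mul_apply,
        Fin.sum_univ_two, Fin.sum_univ_two]
    rw [show g i k = fun x => jmat⁻¹ i 0 * (M x 0 0 * T x z 0 k + M x 0 1 * T x z 1 k)
        + jmat⁻¹ i 1 * (M x 1 0 * T x z 0 k + M x 1 1 * T x z 1 k) from funext h1]
    exact ((((hMint 0 0 a b).mul_continuousOn (hTc z 0 k).continuousOn).add
        ((hMint 0 1 a b).mul_continuousOn (hTc z 1 k).continuousOn)).const_mul _).add
      ((((hMint 1 0 a b).mul_continuousOn (hTc z 0 k).continuousOn).add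
        ((hMint 1 1 a b).mul_continuousOn (hTc z 1 k).continuousOn)).const_mul _)
  have hS : ∀ x : ℝ, ((T x z)ᴴ * jmat * T x z)ᴴ = -((T x z)ᴴ * jmat * T x z) := by
    intro x
    simp [Matrix.conjTranspose_mul, jmat_herm, Matrix.mul_assoc]
  rw [Matrix.posSemidef_iff_dotProduct_mulVec]
  constructor
  · show _ᴴ = _
    rw [Matrix.conjTranspose_neg, Matrix.conjTranspose_smul, Matrix.conjTranspose_sub,
      hS x₂, hS x₁]
    simp [Complex.inv_I, smul_sub]
  intro v
  set w : ℝ → Fin 2 → ℂ := fun x p => T x z p 0 * v 0 + T x z p 1 * v 1 with hwdef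
  set f : Fin 2 → ℝ → ℂ := fun p x => g p 0 x * v 0 + g p 1 x * v 1 with hfdef
  have hfint : ∀ (p : Fin 2) (a b : ℝ), IntervalIntegrable (f p) volume a b := fun p a b =>
    ((hgint p 0 a b).mul_const _).add ((hgint p 1 a b).mul_const _)
  have hwcont : ∀ p, Continuous (fun x => w x p) := fun p =>
    ((hTc z p 0).mul continuous_const).add ((hTc z p 1).mul continuous_const)
  have hwrep : ∀ p x, w x p = w 0 p + ∫ t in (0:ℝ)..x, f p t := by
    intro p x
    have e0 : ∀ k, T 0 z p k = (1 : Matrix (Fin 2) (Fin 2) ℂ) p k := by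
      intro k; rw [hT z 0 p k, intervalIntegral.integral_same, add_zero]
    show T x z p 0 * v 0 + T x z p 1 * v 1
        = (T 0 z p 0 * v 0 + T 0 z p 1 * v 1) + ∫ t in (0:ℝ)..x, (g p 0 t * v 0 + g p 1 t * v 1)
    rw [intervalIntegral.integral_add ((hgint p 0 0 x).mul_const _) ((hgint p 1 0 x).mul_const _),
      intervalIntegral.integral_mul_const, intervalIntegral.integral_mul_const,
      hT z x p 0, hT z x p 1, e0 0, e0 1]
    ring
  have hwrep' : ∀ p x, w x p = w x₁ p + ∫ t in x₁..x, f p t := by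
    intro p x
    have h := intervalIntegral.integral_add_adjacent_intervals (hfint p 0 x₁) (hfint p x₁ x)
    rw [hwrep p x, hwrep p x₁, ← h]; ring
  have hcrep : ∀ p x, (starRingEnd ℂ) (w x p)
      = (starRingEnd ℂ) (w x₁ p) + ∫ t in x₁..x, (starRingEnd ℂ) (f p t) := by
    intro p x
    rw [intervalIntegral_conj, ← map_add, ← hwrep' p x]
  have P1 := parts h12 (fun x => (starRingEnd ℂ) (w x 1)) (fun x => w x 0)
    (fun x => (starRingEnd ℂ) (f 1 x)) (f 0)
    (II.conj' (hfint 1 x₁ x₂)) (hfint 0 x₁ x₂)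
    (Complex.continuous_conj.comp (hwcont 1)) (hwcont 0)
    (fun x => hcrep 1 x) (fun x => hwrep' 0 x)
  have P2 := parts h12 (fun x => (starRingEnd ℂ) (w x 0)) (fun x => w x 1)
    (fun x => (starRingEnd ℂ) (f 0 x)) (f 1)
    (II.conj' (hfint 0 x₁ x₂)) (hfint 1 x₁ x₂)
    (Complex.continuous_conj.comp (hwcont 0)) (hwcont 1)
    (fun x => hcrep 0 x) (fun x => hwrep' 1 x)
  set Ifun : ℝ → ℂ := fun x =>
      ((starRingEnd ℂ) (f 1 x) * w x 0 + (starRingEnd ℂ) (w x 1) * f 0 x)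
      - ((starRingEnd ℂ) (f 0 x) * w x 1 + (starRingEnd ℂ) (w x 0) * f 1 x) with hIdef
  have hi1 : IntervalIntegrable
      (fun x => (starRingEnd ℂ) (f 1 x) * w x 0 + (starRingEnd ℂ) (w x 1) * f 0 x) volume x₁ x₂ :=
    ((II.conj' (hfint 1 x₁ x₂)).mul_continuousOn (hwcont 0).continuousOn).add
      ((hfint 0 x₁ x₂).continuousOn_mul (Complex.continuous_conj.comp (hwcont 1)).continuousOn)
  have hi2 : IntervalIntegrable
      (fun x => (starRingEnd ℂ) (f 0 x) * w x 1 + (starRingEnd ℂ) (w x 0) * f 1 x) volume x₁ x₂ :=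
    ((II.conj' (hfint 0 x₁ x₂)).mul_continuousOn (hwcont 1).continuousOn).add
      ((hfint 1 x₁ x₂).continuousOn_mul (Complex.continuous_conj.comp (hwcont 0)).continuousOn)
  have hφint : ∫ x in x₁..x₂, Ifun x
      = (((starRingEnd ℂ) (w x₂ 1) * w x₂ 0 - (starRingEnd ℂ) (w x₂ 0) * w x₂ 1)
        - ((starRingEnd ℂ) (w x₁ 1) * w x₁ 0 - (starRingEnd ℂ) (w x₁ 0) * w x₁ 1)) := by
    rw [hIdef]
    rw [intervalIntegral.integral_sub hi1 hi2, ← P1, ← P2]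
    ring
  have hquad : dotProduct (star v)
      ((-(Complex.I⁻¹ • ((T x₂ z)ᴴ * jmat * T x₂ z - (T x₁ z)ᴴ * jmat * T x₁ z))) *ᵥ v)
      = Complex.I * (((starRingEnd ℂ) (w x₂ 1) * w x₂ 0 - (starRingEnd ℂ) (w x₂ 0) * w x₂ 1)
        - ((starRingEnd ℂ) (w x₁ 1) * w x₁ 0 - (starRingEnd ℂ) (w x₁ 0) * w x₁ 1)) := by
    simp only [hwdef]
    simp [dotProduct, Matrix.mulVec, Fin.sum_univ_two, Matrix.mul_apply,
      Matrix.conjTranspose_apply, Matrix.sub_apply, Matrix.smul_apply, Matrix.neg_apply,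
      jmat, Complex.inv_I, Pi.star_apply, RCLike.star_def, map_add, _root_.map_mul, smul_eq_mul]
    ring
  have hsub : Set.Ioc x₁ x₂ ⊆ Set.Ici (0:ℝ) := fun t ht => le_trans hx₁ ht.1.le
  have hsub' : Set.Icc x₁ x₂ ⊆ Set.Ici (0:ℝ) := fun t ht => le_trans hx₁ ht.1
  set ρ : ℝ → ℝ := fun x => (fun p => (w x p).re) ⬝ᵥ A x *ᵥ (fun p => (w x p).re)
      + (fun p => (w x p).im) ⬝ᵥ A x *ᵥ (fun p => (w x p).im) with hρdef
  have haekey : ∀ᵐ x ∂(volume.restrict (Set.Ioc x₁ x₂)),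
      Ifun x = ((starRingEnd ℂ) z - z) * (ρ x : ℂ) := by
    filter_upwards [ae_restrict_of_ae_restrict_of_subset hsub hA,
      ae_restrict_of_ae_restrict_of_subset hsub hB] with x hAx hBx
    have hA10 : A x 1 0 = A x 0 1 := by
      have h := congrFun (congrFun hAx.1 0) 1
      simpa [Matrix.conjTranspose_apply] using h
    have hB10 : B x 1 0 = B x 0 1 := by
      have h := congrFun (congrFun hBx 0) 1
      simpa [Matrix.transpose_apply] using h
    have hq := cplx_quad hAx (w x)
    have hfw : ∀ p : Fin 2, f p x = (jmat⁻¹ * M x) p 0 * w x 0 + (jmat⁻¹ * M x) p 1 * w x 1 := by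
      intro p
      show (jmat⁻¹ * (M x * T x z)) p 0 * v 0 + (jmat⁻¹ * (M x * T x z)) p 1 * v 1 = _
      simp [Matrix.mul_apply, Fin.sum_univ_two, hwdef]; ring
    have step1 := ptwise z (A x) (B x) hA10 hB10 (w x) (fun p => f p x) hfw
    show ((starRingEnd ℂ) (f 1 x) * w x 0 + (starRingEnd ℂ) (w x 1) * f 0 x)
      - ((starRingEnd ℂ) (f 0 x) * w x 1 + (starRingEnd ℂ) (w x 0) * f 1 x)
      = ((starRingEnd ℂ) z - z) * (ρ x : ℂ)
    rw [step1, hq]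
  have hcongr : ∫ x in x₁..x₂, Ifun x
      = ∫ x in x₁..x₂, ((starRingEnd ℂ) z - z) * (ρ x : ℂ) := by
    apply intervalIntegral.integral_congr_ae
    rw [Set.uIoc_of_le h12]
    exact (ae_restrict_iff' measurableSet_Ioc).mp haekey
  have hρ0 : 0 ≤ ∫ x in x₁..x₂, ρ x := by
    apply intervalIntegral.integral_nonneg_of_ae_restrict h12
    filter_upwards [ae_restrict_of_ae_restrict_of_subset hsub' hA] with x hAx
    exact add_nonneg (by simpa using hAx.dotProduct_mulVec_nonneg fun p => (w x p).re)
      (by simpa using hAx.dotProduct_mulVec_nonneg fun p => (w x p).im)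
  rw [hquad, ← hφint, hcongr, intervalIntegral.integral_const_mul,
    intervalIntegral.integral_ofReal]
  have hfactor : Complex.I * (((starRingEnd ℂ) z - z) * ((∫ x in x₁..x₂, ρ x : ℝ) : ℂ))
      = (((2 * z.im) * ∫ x in x₁..x₂, ρ x : ℝ) : ℂ) := by
    have h1 : (starRingEnd ℂ) z - z = -((2 * z.im : ℝ) * Complex.I) := by
      rw [← Complex.sub_conj]; ring
    rw [h1]
    push_cast
    linear_combination (-(2 * (z.im:ℂ) * ((∫ x in x₁..x₂, ρ x : ℝ) : ℂ))) * Complex.I_sq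
  rw [hfactor]
  exact Complex.zero_le_real.mpr (mul_nonneg (mul_nonneg (by norm_num) hz.le) hρ0)
end

section
/- Let m : ℂ₊ → ℂ₊ ∪ ℝ ∪ {∞} be an analytic map of the upper half-plane to the closed upper half-plane (a Herglotz function, possibly a real or infinite constant), and fix ξ ∈ ℝ. For r ≥ 1 define m_r(z) := m(ξ + z/r). If m_r converges locally uniformly on ℂ₊ (with respect to the chordal metric on the Riemann sphere) to some analytic function f as r → ∞, then f is a constant function. -/
open Filter Complex Topology

theorem stmt11 (m f : ℂ → ℂ) (ξ : ℝ)
    (hm : DifferentiableOn ℂ m {z : ℂ | 0 < z.im})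
    (hmap : Set.MapsTo m {z : ℂ | 0 < z.im} {z : ℂ | 0 ≤ z.im})
    (hf : DifferentiableOn ℂ f {z : ℂ | 0 < z.im})
    (hconv : TendstoLocallyUniformlyOn (fun (r : ℝ) (z : ℂ) => m ((ξ : ℂ) + z / (r : ℂ))) f
      Filter.atTop {z : ℂ | 0 < z.im}) :
    ∃ c : ℂ, Set.EqOn f (fun _ => c) {z : ℂ | 0 < z.im} := by
  set S : Set ℂ := {z : ℂ | 0 < z.im} with hS
  have hSopen : IsOpen S := isOpen_lt continuous_const Complex.continuous_im
  have hImem : Complex.I ∈ S := by simp [hS]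
  -- key: f is constant on the positive imaginary ray
  have key : ∀ l : ℝ, 0 < l → f ((l : ℂ) * Complex.I) = f Complex.I := by
    intro l hl
    have hmem : (l : ℂ) * Complex.I ∈ S := by
      simp [hS, Complex.mul_im, hl]
    have h1 : Tendsto (fun r : ℝ => m ((ξ : ℂ) + Complex.I / (r : ℂ))) atTop
        (𝓝 (f Complex.I)) := hconv.tendsto_at hImem
    have h2 : Tendsto (fun r : ℝ => m ((ξ : ℂ) + ((l : ℂ) * Complex.I) / (r : ℂ))) atTop
        (𝓝 (f ((l : ℂ) * Complex.I))) := hconv.tendsto_at hmem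
    have h3 : Tendsto (fun r : ℝ => r / l) atTop atTop :=
      tendsto_id.atTop_div_const hl
    have h4 : Tendsto (fun r : ℝ => m ((ξ : ℂ) + Complex.I / ((r / l : ℝ) : ℂ))) atTop
        (𝓝 (f Complex.I)) := h1.comp h3
    have heq : (fun r : ℝ => m ((ξ : ℂ) + Complex.I / ((r / l : ℝ) : ℂ)))
        = fun r : ℝ => m ((ξ : ℂ) + ((l : ℂ) * Complex.I) / (r : ℂ)) := by
      funext r
      congr 1
      push_cast
      rw [div_div_eq_mul_div, mul_comm]
    rw [heq] at h4
    exact tendsto_nhds_unique h2 h4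
  refine ⟨f Complex.I, ?_⟩
  have hfa : AnalyticOnNhd ℂ f S := hf.analyticOnNhd hSopen
  have hca : AnalyticOnNhd ℂ (fun _ => f Complex.I) S := analyticOnNhd_const
  have hconn : IsPreconnected S := (convex_halfSpace_im_gt 0).isPreconnected
  have hfreq : ∃ᶠ z in 𝓝[≠] Complex.I, f z = f Complex.I := by
    set u : ℕ → ℂ := fun n => ((1 + ((n : ℝ) + 1)⁻¹ : ℝ) : ℂ) * Complex.I with hu
    have hpos : ∀ n : ℕ, (0 : ℝ) < 1 + ((n : ℝ) + 1)⁻¹ := by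
      intro n; positivity
    have htend : Tendsto u atTop (𝓝[≠] Complex.I) := by
      rw [tendsto_nhdsWithin_iff]
      constructor
      · have : Tendsto (fun n : ℕ => (1 + ((n : ℝ) + 1)⁻¹ : ℝ)) atTop (𝓝 1) := by
          have := tendsto_one_div_add_atTop_nhds_zero_nat (𝕜 := ℝ)
          simpa [one_div] using (tendsto_const_nhds (x := (1:ℝ))).add this
        have : Tendsto (fun n : ℕ => (((1 + ((n : ℝ) + 1)⁻¹ : ℝ)) : ℂ)) atTop (𝓝 1) := by
          simpa [Function.comp_def] using (Complex.continuous_ofReal.continuousAt.tendsto.comp this)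
        simpa [hu] using this.mul_const Complex.I
      · filter_upwards with n
        simp only [hu, Set.mem_compl_iff, Set.mem_singleton_iff]
        intro h
        have him := congrArg Complex.im h
        simp [Complex.mul_im] at him
        have hp : (0:ℝ) < (n : ℝ) + 1 := by positivity
        rcases him with h' | h'
        · linarith
        · have h'' : ((n : ℝ) + 1) = 0 := by exact_mod_cast h'
          linarith
    have hall : ∀ n, f (u n) = f Complex.I := fun n => key _ (hpos n)
    exact htend.frequently (Frequently.of_forall hall)
  exact hfa.eqOn_of_preconnected_of_frequently_eq hca hconn hImem hfreq
end
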